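/- Let α, σ > 0, set γ = (1/2)√(2σ² + α²) and ψ(x) = -α/σ² + (2γ/σ²) · (sinh(γx) + (α/(2γ))cosh(γx)) / (cosh(γx) + (α/(2γ))sinh(γx)). Then ψ(0) = 0, ψ'(0) = 1, and ψ satisfies the Riccati equation ψ'(x) = 1 - αψ(x) - (σ²/2)ψ(x)² for all x ≥ 0. -/

import Mathlib

set_option maxHeartbeats 1000000

/-- CIR Riccati function: with `γ = (1/2)√(2σ²+α²)` and
`ψ x = -α/σ² + (2γ/σ²)(sinh(γx) + (α/2γ)cosh(γx))/(cosh(γx) + (α/2γ)sinh(γx))`,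
one has `ψ 0 = 0`, `ψ' 0 = 1`, and `ψ' x = 1 - α ψ x - (σ²/2) (ψ x)²` for `x ≥ 0`. -/
theorem cir_riccati (α σ : ℝ) (hα : 0 < α) (hσ : 0 < σ) :
    letI γ : ℝ := (1 / 2) * Real.sqrt (2 * σ ^ 2 + α ^ 2)
    letI ψ : ℝ → ℝ := fun x =>
      -α / σ ^ 2 + (2 * γ / σ ^ 2) *
        (Real.sinh (γ * x) + (α / (2 * γ)) * Real.cosh (γ * x)) /
        (Real.cosh (γ * x) + (α / (2 * γ)) * Real.sinh (γ * x))
    ψ 0 = 0 ∧ HasDerivAt ψ 1 0 ∧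
      ∀ x : ℝ, 0 ≤ x →
        HasDerivAt ψ (1 - α * ψ x - σ ^ 2 / 2 * (ψ x) ^ 2) x := by
  set γ : ℝ := (1 / 2) * Real.sqrt (2 * σ ^ 2 + α ^ 2) with hγdef
  set ψ : ℝ → ℝ := fun x =>
      -α / σ ^ 2 + (2 * γ / σ ^ 2) *
        (Real.sinh (γ * x) + (α / (2 * γ)) * Real.cosh (γ * x)) /
        (Real.cosh (γ * x) + (α / (2 * γ)) * Real.sinh (γ * x)) with hψdef
  have hs : (0:ℝ) < 2 * σ ^ 2 + α ^ 2 := by positivity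
  have hγpos : 0 < γ := by
    have := Real.sqrt_pos.mpr hs
    rw [hγdef]; linarith
  have h4 : (2 * γ) ^ 2 = 2 * σ ^ 2 + α ^ 2 := by
    have : Real.sqrt (2 * σ ^ 2 + α ^ 2) ^ 2 = 2 * σ ^ 2 + α ^ 2 :=
      Real.sq_sqrt hs.le
    rw [hγdef]; ring_nf; ring_nf at this; linarith
  have hγ2 : γ ^ 2 = (2 * σ ^ 2 + α ^ 2) / 4 := by nlinarith
  have hσ2 : (σ:ℝ) ^ 2 ≠ 0 := by positivity
  clear_value γ ψ
  have hγne : γ ≠ 0 := ne_of_gt hγpos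
  -- positivity of denominator for x ≥ 0
  have hD : ∀ x : ℝ, 0 ≤ x →
      0 < Real.cosh (γ * x) + (α / (2 * γ)) * Real.sinh (γ * x) := by
    intro x hx
    have h1 : 0 < Real.cosh (γ * x) := Real.cosh_pos _
    have h2 : 0 ≤ Real.sinh (γ * x) := by
      rw [← Real.sinh_zero]
      exact Real.sinh_le_sinh.mpr (by positivity)
    have : 0 ≤ α / (2 * γ) := by positivity
    nlinarith
  -- general derivative lemma
  have key : ∀ x : ℝ, 0 ≤ x →
      HasDerivAt ψ
        (1 / (Real.cosh (γ * x) + (α / (2 * γ)) * Real.sinh (γ * x)) ^ 2) x := by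
    intro x hx
    have hDx := hD x hx
    have hid : HasDerivAt (fun x : ℝ => γ * x) γ x := by
      simpa using (hasDerivAt_id x).const_mul γ
    have hsinh : HasDerivAt (fun x : ℝ => Real.sinh (γ * x))
        (Real.cosh (γ * x) * γ) x := hid.sinh
    have hcosh : HasDerivAt (fun x : ℝ => Real.cosh (γ * x))
        (Real.sinh (γ * x) * γ) x := hid.cosh
    have hN : HasDerivAt (fun x : ℝ =>
        (2 * γ / σ ^ 2) * (Real.sinh (γ * x) + (α / (2 * γ)) * Real.cosh (γ * x)))
        ((2 * γ / σ ^ 2) * (Real.cosh (γ * x) * γ + (α / (2 * γ)) * (Real.sinh (γ * x) * γ))) x :=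
      (hsinh.add ((hcosh).const_mul (α / (2 * γ)))).const_mul _
    have hDd : HasDerivAt (fun x : ℝ =>
        Real.cosh (γ * x) + (α / (2 * γ)) * Real.sinh (γ * x))
        (Real.sinh (γ * x) * γ + (α / (2 * γ)) * (Real.cosh (γ * x) * γ)) x :=
      hcosh.add ((hsinh).const_mul (α / (2 * γ)))
    have hq := hN.div hDd (ne_of_gt hDx)
    have hfinal := (hasDerivAt_const x (-α / σ ^ 2)).add hq
    convert hfinal using 1
    all_goals try rfl
    · rw [hψdef]; rfl
    set s := Real.sinh (γ * x)
    set ch := Real.cosh (γ * x)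
    have hch : ch ^ 2 = 1 + s ^ 2 := by
      have := Real.cosh_sq_sub_sinh_sq (γ * x); simp only [s, ch]; nlinarith
    have hDne : ch + α / (2 * γ) * s ≠ 0 := ne_of_gt hDx
    have hnum : 2 * γ / σ ^ 2 * (ch * γ + α / (2 * γ) * (s * γ)) * (ch + α / (2 * γ) * s) -
          2 * γ / σ ^ 2 * (s + α / (2 * γ) * ch) * (s * γ + α / (2 * γ) * (ch * γ)) = 1 := by
      field_simp
      linear_combination (4*γ^2-α^2)*hch + (1)*h4
    rw [hnum]; ring
  -- the algebraic identity 1/D² = 1 - αψ - σ²/2 ψ²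
  have halg : ∀ x : ℝ, 0 ≤ x →
      1 / (Real.cosh (γ * x) + (α / (2 * γ)) * Real.sinh (γ * x)) ^ 2
        = 1 - α * ψ x - σ ^ 2 / 2 * (ψ x) ^ 2 := by
    intro x hx
    have hDx := hD x hx
    have hDne := ne_of_gt hDx
    set s := Real.sinh (γ * x) with hsdef
    set ch := Real.cosh (γ * x) with hchdef
    have hch : ch ^ 2 = 1 + s ^ 2 := by
      have := Real.cosh_sq_sub_sinh_sq (γ * x); nlinarith
    have hψx : ψ x = s / (γ * (ch + α / (2 * γ) * s)) := by
      have hQ0 : α * s + γ * ch * 2 ≠ 0 := by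
        have he : α * s + γ * ch * 2 = (2 * γ) * (ch + α / (2 * γ) * s) := by
          field_simp; ring
        rw [he]; exact mul_ne_zero (by positivity) hDne
      have hQ1 : 2 * γ * ch + α * s ≠ 0 := by
        convert hQ0 using 1; ring
      rw [hψdef]
      field_simp
      rw [← hsdef, ← hchdef]
      linear_combination s*(2*γ*ch+α*s)*h4
    clear_value s ch
    rw [hψx]
    have hmul : γ * (ch + α / (2 * γ) * s) ≠ 0 := mul_ne_zero hγne hDne
    have hQ : ch * (2 * γ) + α * s ≠ 0 := by
      have he : ch * (2 * γ) + α * s = (2 * γ) * (ch + α / (2 * γ) * s) := by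
        field_simp
      rw [he]
      exact mul_ne_zero (by positivity) hDne
    have hQ2 : ch * 2 * γ + α * s ≠ 0 := by
      convert hQ using 1; ring
    field_simp
    linear_combination (-4*γ^2)*hch + (-s^2)*h4
  have hψ0 : ψ 0 = 0 := by
    simp only [hψdef, mul_zero, Real.sinh_zero, Real.cosh_zero]
    field_simp
    ring
  refine ⟨hψ0, ?_, fun x hx => by rw [← halg x hx]; exact key x hx⟩
  have h0 := key 0 le_rfl
  simpa [Real.sinh_zero, Real.cosh_zero] using h0
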